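/- Let π = (μ₀,μ₁,…) be a policy proper at a state x₀ (i.e., (π,x₀) ∈ C). Then for every k = 0,1,…, 0 ≤ E^π_{x₀}[Ĵ(x_k)] ≤ E^π_{x₀}[J_{π_k}(x_k)] < ∞, where π_k = (μ_k,μ_{k+1},…) is the tail policy and x_k is the state after k steps under π from x₀. -/

import Mathlib

open scoped ENNReal
open Filter
open scoped Classical NNReal

/-- A stochastic shortest path (SSP) problem with state space `X`, control space `U`,
countable disturbance space `W`, a cost-free absorbing termination state `t`,
nonempty control constraint sets `Uc x ⊆ U`, disturbance distributions `P x u`,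
system function `f`, and nonnegative (finite-valued) cost per stage `g`. -/
structure SSP (X U W : Type*) [Countable W] where
  t : X
  Uc : X → Set U
  Uc_nonempty : ∀ x, (Uc x).Nonempty
  P : X → U → PMF W
  f : X → U → W → X
  g : X → U → W → ℝ≥0∞
  g_lt_top : ∀ x u w, g x u w < ⊤
  f_absorb : ∀ u ∈ Uc t, ∀ w, f t u w = t
  g_zero : ∀ u ∈ Uc t, ∀ w, g t u w = 0

namespace SSP

variable {X U W : Type*} [Countable W] (S : SSP X U W)

/-- A policy `π = (μ₀, μ₁, …)` is admissible if `μ_k(x) ∈ U(x)` for all `k, x`. -/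
def IsPolicy (π : ℕ → X → U) : Prop := ∀ k x, π k x ∈ S.Uc x

/-- Distribution of the state `x_k` after `k` steps under policy `π` starting from `x₀`. -/
noncomputable def stateDist (π : ℕ → X → U) (x₀ : X) : ℕ → PMF X
  | 0 => PMF.pure x₀
  | k + 1 => (stateDist π x₀ k).bind fun x => (S.P x (π k x)).map (S.f x (π k x))

/-- Expected value `E^π_{x₀}[J(x_k)]` of a nonnegative function along the trajectory. -/
noncomputable def expect (π : ℕ → X → U) (x₀ : X) (k : ℕ) (J : X → ℝ≥0∞) : ℝ≥0∞ :=
  ∑' x, S.stateDist π x₀ k x * J x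

/-- Expected cost `E^π_{x₀}[g(x_k, μ_k(x_k), w_k)]` of the `k`-th stage. -/
noncomputable def stageCost (π : ℕ → X → U) (x₀ : X) (k : ℕ) : ℝ≥0∞ :=
  S.expect π x₀ k fun x => ∑' w, S.P x (π k x) w * S.g x (π k x) w

/-- The cost `J_π(x₀) = Σ_{k≥0} E^π_{x₀}[g(x_k, μ_k(x_k), w_k)]` of a policy. -/
noncomputable def Jcost (π : ℕ → X → U) (x₀ : X) : ℝ≥0∞ :=
  ∑' k, S.stageCost π x₀ k

/-- `r_k(π, x₀)`: probability that `x_k ≠ t` under `π` starting from `x₀`. -/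
noncomputable def r (π : ℕ → X → U) (x₀ : X) (k : ℕ) : ℝ≥0∞ :=
  S.expect π x₀ k fun x => if x = S.t then 0 else 1

/-- `Σ_{k≥0} r_k(π,x₀)`: expected number of steps to reach the destination. -/
noncomputable def N (π : ℕ → X → U) (x₀ : X) : ℝ≥0∞ := ∑' k, S.r π x₀ k

/-- A policy is proper at `x` if it is admissible, `J_π(x) < ∞` and `Σ_k r_k(π,x) < ∞`. -/
def ProperAt (π : ℕ → X → U) (x : X) : Prop :=
  S.IsPolicy π ∧ S.Jcost π x < ⊤ ∧ S.N π x < ⊤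

/-- The optimal cost function `J*`. -/
noncomputable def Jstar (x : X) : ℝ≥0∞ := ⨅ π ∈ {π | S.IsPolicy π}, S.Jcost π x

/-- The restricted optimal cost function `Ĵ` over policies proper at `x`
(infimum over the empty set is `∞`). -/
noncomputable def Jhat (x : X) : ℝ≥0∞ := ⨅ π ∈ {π | S.ProperAt π x}, S.Jcost π x

/-- The effective domain `X̂ = {x | Ĵ(x) < ∞}` of `Ĵ`. -/
def Xhat : Set X := {x | S.Jhat x < ⊤}

/-- Expected `k`-th stage cost in the `δ`-perturbed problem (stage cost `g + δ` off `t`). -/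
noncomputable def stageCostPert (δ : ℝ≥0∞) (π : ℕ → X → U) (x₀ : X) (k : ℕ) : ℝ≥0∞ :=
  S.expect π x₀ k fun x =>
    ∑' w, S.P x (π k x) w * (S.g x (π k x) w + if x = S.t then 0 else δ)

/-- The cost `J_{π,δ}` of a policy in the `δ`-perturbed problem. -/
noncomputable def Jpert (δ : ℝ≥0∞) (π : ℕ → X → U) (x₀ : X) : ℝ≥0∞ :=
  ∑' k, S.stageCostPert δ π x₀ k

/-- The optimal cost function `Ĵ_δ` of the `δ`-perturbed problem. -/
noncomputable def JhatPert (δ : ℝ≥0∞) (x : X) : ℝ≥0∞ :=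
  ⨅ π ∈ {π | S.IsPolicy π}, S.Jpert δ π x

/-- `Q J x u = E_{w∼P(·|x,u)}[g(x,u,w) + J(f(x,u,w))]`. -/
noncomputable def Q (J : X → ℝ≥0∞) (x : X) (u : U) : ℝ≥0∞ :=
  ∑' w, S.P x u w * (S.g x u w + J (S.f x u w))

/-- The Bellman operator `(TJ)(x) = inf_{u ∈ U(x)} E[g(x,u,w) + J(f(x,u,w))]`. -/
noncomputable def bellman (J : X → ℝ≥0∞) (x : X) : ℝ≥0∞ := ⨅ u ∈ S.Uc x, S.Q J x u

/-- The tail policy `π_k = (μ_k, μ_{k+1}, …)`. -/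
def tail (π : ℕ → X → U) (k : ℕ) : ℕ → X → U := fun m => π (k + m)

/-- The set `Ŵ` of functions `J` with `J(t) = 0`, `Ĵ ≤ J`, and
`E^π_{x₀}[J(x_k)] → 0` for every pair `(π, x₀)` with `π` proper at `x₀`. -/
def What : Set (X → ℝ≥0∞) :=
  {J | J S.t = 0 ∧ S.Jhat ≤ J ∧
    ∀ π x₀, S.ProperAt π x₀ → Tendsto (fun k => S.expect π x₀ k J) atTop (nhds 0)}

/-- The set `B` of functions `J` with `J(t) = 0` that are bounded over `X̂`. -/
def Bset : Set (X → ℝ≥0∞) :=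
  {J | J S.t = 0 ∧ (⨆ x ∈ S.Xhat, J x) < ⊤}

/-- A policy is uniformly proper if it is admissible and the expected number of steps
to reach the destination is uniformly bounded over `X̂`. -/
def UniformlyProper (π : ℕ → X → U) : Prop :=
  S.IsPolicy π ∧ (⨆ x ∈ S.Xhat, S.N π x) < ⊤

/-- The cost per stage `g` is (uniformly) bounded over `X × U × W`. -/
def BoundedCost : Prop := ∃ b : ℝ≥0∞, b < ⊤ ∧ ∀ x u w, S.g x u w ≤ b

section Aux

lemma stateDist_add (π : ℕ → X → U) (x₀ : X) (k m : ℕ) :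
    S.stateDist π x₀ (k + m) =
      (S.stateDist π x₀ k).bind (fun x => S.stateDist (SSP.tail π k) x m) := by
  induction m with
  | zero => simp [SSP.stateDist]
  | succ m ih =>
    show (S.stateDist π x₀ (k + m)).bind _ = _
    rw [ih, PMF.bind_bind]
    rfl

lemma expect_add (π : ℕ → X → U) (x₀ : X) (k m : ℕ) (J : X → ℝ≥0∞) :
    S.expect π x₀ (k + m) J =
      S.expect π x₀ k (fun x => S.expect (SSP.tail π k) x m J) := by
  unfold SSP.expect
  rw [S.stateDist_add π x₀ k m]
  simp only [PMF.bind_apply]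
  calc (∑' x, (∑' y, S.stateDist π x₀ k y * S.stateDist (SSP.tail π k) y m x) * J x)
      = ∑' x, ∑' y, S.stateDist π x₀ k y * (S.stateDist (SSP.tail π k) y m x * J x) := by
        congr 1; ext x
        rw [← ENNReal.tsum_mul_right]
        exact tsum_congr fun y => mul_assoc _ _ _
    _ = ∑' y, ∑' x, S.stateDist π x₀ k y * (S.stateDist (SSP.tail π k) y m x * J x) :=
        ENNReal.tsum_comm
    _ = _ := by
        congr 1; ext y
        rw [ENNReal.tsum_mul_left]

lemma stageCost_add (π : ℕ → X → U) (x₀ : X) (k m : ℕ) :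
    S.stageCost π x₀ (k + m) =
      S.expect π x₀ k (fun x => S.stageCost (SSP.tail π k) x m) :=
  S.expect_add π x₀ k m _

lemma expect_Jcost_tail (π : ℕ → X → U) (x₀ : X) (k : ℕ) :
    S.expect π x₀ k (S.Jcost (SSP.tail π k)) = ∑' m, S.stageCost π x₀ (k + m) := by
  simp only [S.stageCost_add π x₀ k]
  unfold SSP.expect SSP.Jcost
  rw [ENNReal.tsum_comm]
  congr 1; ext x
  rw [ENNReal.tsum_mul_left]

lemma r_add (π : ℕ → X → U) (x₀ : X) (k m : ℕ) :
    S.r π x₀ (k + m) = S.expect π x₀ k (fun x => S.r (SSP.tail π k) x m) :=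
  S.expect_add π x₀ k m _

lemma expect_N_tail (π : ℕ → X → U) (x₀ : X) (k : ℕ) :
    S.expect π x₀ k (S.N (SSP.tail π k)) = ∑' m, S.r π x₀ (k + m) := by
  simp only [S.r_add π x₀ k]
  unfold SSP.expect SSP.N
  rw [ENNReal.tsum_comm]
  congr 1; ext x
  rw [ENNReal.tsum_mul_left]

lemma tsum_shift_le (f : ℕ → ℝ≥0∞) (k : ℕ) : (∑' m, f (k + m)) ≤ ∑' n, f n :=
  ENNReal.summable.tsum_le_tsum_of_inj (fun m => k + m) (add_right_injective k)
    (fun _ _ => zero_le) (fun _ => le_rfl) ENNReal.summable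

end Aux

end SSP

/-- If `π` is proper at `x₀`, then for every `k`,
`0 ≤ E^π_{x₀}[Ĵ(x_k)] ≤ E^π_{x₀}[J_{π_k}(x_k)] < ∞`, where `π_k` is the tail policy. -/
theorem expected_tail_cost_finite {X U W : Type*} [Countable W] (S : SSP X U W)
    (π : ℕ → X → U) (x₀ : X) (h : S.ProperAt π x₀) (k : ℕ) :
    0 ≤ S.expect π x₀ k S.Jhat ∧
    S.expect π x₀ k S.Jhat ≤ S.expect π x₀ k (S.Jcost (SSP.tail π k)) ∧
    S.expect π x₀ k (S.Jcost (SSP.tail π k)) < ⊤ := by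
  have hJfin : S.expect π x₀ k (S.Jcost (SSP.tail π k)) < ⊤ := by
    rw [S.expect_Jcost_tail]
    exact lt_of_le_of_lt (SSP.tsum_shift_le _ k) h.2.1
  have hNfin : S.expect π x₀ k (S.N (SSP.tail π k)) < ⊤ := by
    rw [S.expect_N_tail]
    exact lt_of_le_of_lt (SSP.tsum_shift_le _ k) h.2.2
  refine ⟨zero_le, ?_, hJfin⟩
  refine ENNReal.tsum_le_tsum fun x => ?_
  rcases eq_or_ne (S.stateDist π x₀ k x) 0 with h0 | h0
  · simp [h0]
  · have hd_ne_top : S.stateDist π x₀ k x ≠ ⊤ := (S.stateDist π x₀ k).apply_ne_top x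
    have key : ∀ F : X → ℝ≥0∞, S.expect π x₀ k F < ⊤ → F x < ⊤ := by
      intro F hF
      have hle : S.stateDist π x₀ k x * F x ≤ S.expect π x₀ k F :=
        ENNReal.le_tsum x
      by_contra htop
      rw [not_lt, top_le_iff] at htop
      rw [htop, ENNReal.mul_top h0] at hle
      exact (lt_of_le_of_lt hle hF).ne rfl
    have hproper : S.ProperAt (SSP.tail π k) x :=
      ⟨fun m y => h.1 (k + m) y, key _ hJfin, key _ hNfin⟩
    have : S.Jhat x ≤ S.Jcost (SSP.tail π k) x :=
      biInf_le (f := fun π' => S.Jcost π' x) hproper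
    exact mul_le_mul_right this _
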